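/- Let G be a finite group, A a commutative ring in which the order |G| of G is invertible, M an A-module equipped with an A-linear G-action, and I an ideal of A. Then the natural A-linear map M^G / (I • M^G) → (M / (I • M))^G, induced by the quotient map M → M/IM (which is G-equivariant since the action is A-linear), is bijective. -/
import Mathlib


/-- The submodule of `G`-fixed points of an `A`-module with an `A`-linear `G`-action. -/
def fixedSubmodule (G : Type*) {A M : Type*} [Group G] [CommRing A] [AddCommGroup M]
    [Module A M] [DistribMulAction G M] [SMulCommClass G A M] : Submodule A M where
  carrier := {m | ∀ g : G, g • m = m}
  add_mem' := fun {x y} hx hy g => by rw [smul_add, hx g, hy g]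
  zero_mem' := fun g => smul_zero g
  smul_mem' := fun a m hm g => by rw [smul_comm, hm g]

section Avg

variable {G A M : Type*} [Group G] [Fintype G] [CommRing A]
  [AddCommGroup M] [Module A M] [DistribMulAction G M] [SMulCommClass G A M]

/-- The averaging operator `m ↦ c • ∑ g, g • m` where `c = |G|⁻¹`. -/
noncomputable def avg (hu : IsUnit ((Fintype.card G : A))) (m : M) : M :=
  (↑hu.unit⁻¹ : A) • ∑ g : G, g • m

theorem avg_mem_fixed (hu : IsUnit ((Fintype.card G : A))) (m : M) :
    avg hu m ∈ fixedSubmodule G (A := A) (M := M) := by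
  intro g
  unfold avg
  rw [smul_comm, Finset.smul_sum]
  congr 1
  simp_rw [smul_smul]
  exact Fintype.sum_bijective (fun h => g * h) (Group.mulLeft_bijective g) _ _ (fun h => rfl)

theorem avg_of_fixed (hu : IsUnit ((Fintype.card G : A)))
    {m : M} (hm : m ∈ fixedSubmodule G (A := A) (M := M)) : avg hu m = m := by
  unfold avg
  have : ∑ g : G, g • m = (Fintype.card G : A) • m := by
    rw [Nat.cast_smul_eq_nsmul]
    simp [hm _]
  rw [this, smul_smul, IsUnit.val_inv_mul, one_smul]

theorem avg_add (hu : IsUnit ((Fintype.card G : A))) (m n : M) :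
    avg hu (m + n) = avg hu m + avg hu n := by
  unfold avg
  simp [smul_add, Finset.sum_add_distrib]

theorem avg_smul (hu : IsUnit ((Fintype.card G : A))) (a : A) (m : M) :
    avg hu (a • m) = a • avg hu m := by
  unfold avg
  simp_rw [smul_comm _ a, Finset.smul_sum, smul_comm _ a]

theorem avg_sub (hu : IsUnit ((Fintype.card G : A))) (m n : M) :
    avg hu (m - n) = avg hu m - avg hu n := by
  unfold avg
  simp [smul_sub, Finset.sum_sub_distrib]

end Avg

/-- Let `G` be a finite group, `A` a commutative ring in which `|G|` is invertible,
`M` an `A`-module with an `A`-linear `G`-action, and `I` an ideal of `A`.  Then the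
natural map `M^G / (I • M^G) → (M / IM)^G` is bijective: (surjectivity) every element
of `M` which is `G`-fixed modulo `IM` is congruent modulo `IM` to a genuinely fixed
element; (injectivity) every fixed element lying in `IM` lies in `I • M^G`. -/
theorem fixed_points_mod_ideal_bijective
    {G A M : Type*} [Group G] [Fintype G] [CommRing A]
    [AddCommGroup M] [Module A M] [DistribMulAction G M] [SMulCommClass G A M]
    (hu : IsUnit ((Fintype.card G : A))) (I : Ideal A) :
    (∀ m : M, (∀ g : G, g • m - m ∈ (I • ⊤ : Submodule A M)) →
      ∃ m₀ ∈ fixedSubmodule G (A := A) (M := M),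
        m - m₀ ∈ (I • ⊤ : Submodule A M)) ∧
    (∀ m ∈ fixedSubmodule G (A := A) (M := M),
      m ∈ (I • ⊤ : Submodule A M) → m ∈ I • fixedSubmodule G (A := A) (M := M)) := by
  constructor
  · intro m hm
    refine ⟨avg hu m, avg_mem_fixed hu m, ?_⟩
    have : m - avg hu m = (↑hu.unit⁻¹ : A) • ∑ g : G, (m - g • m) := by
      rw [Finset.sum_sub_distrib, smul_sub, avg]
      congr 1
      have : ∑ _g : G, m = (Fintype.card G : A) • m := by
        rw [Nat.cast_smul_eq_nsmul]; simp
      rw [this, smul_smul, IsUnit.val_inv_mul, one_smul]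
    rw [this]
    refine Submodule.smul_mem _ _ (Submodule.sum_mem _ fun g _ => ?_)
    have := hm g
    simpa using Submodule.neg_mem _ this
  · intro m hmfix hm
    have key : avg hu m ∈ I • fixedSubmodule G (A := A) (M := M) := by
      refine Submodule.smul_induction_on hm ?_ ?_
      · intro a ha n _
        rw [avg_smul]
        exact Submodule.smul_mem_smul ha (avg_mem_fixed hu n)
      · intro x y hx hy
        rw [avg_add]; exact Submodule.add_mem _ hx hy
    rwa [avg_of_fixed hu hmfix] at key
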